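/- Let X be a polynomial of degree n with Dis(X) = 0, x_0 = X(0) > 0 real, and all roots nonzero. Then there exists a polynomial Q of degree n with Q(0) > 0 real, V(Q) = Res(Q, Q*) = 0, and Q(z)Q*(z) = X(z)X*(z). -/

import Mathlib

open Polynomial

/-- Reciprocal polynomial `P*(z) = z^n conj(P)(1/z)`. -/
noncomputable def recip (n : ℕ) (P : Polynomial ℂ) : Polynomial ℂ :=
  (P.map (starRingEnd ℂ)).reflect n

/-- Resultant via the root (Cayley) formula. -/
noncomputable def res (P Q : Polynomial ℂ) : ℂ :=
  P.leadingCoeff ^ Q.natDegree * Q.leadingCoeff ^ P.natDegree *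
    (P.roots.bind fun a => Q.roots.map fun b => b - a).prod

/-- Discriminant via the root formula. -/
noncomputable def disc (P : Polynomial ℂ) : ℂ :=
  P.leadingCoeff ^ (2 * P.natDegree - 2) *
    ∏ p ∈ Finset.univ.filter
      (fun p : Fin P.roots.toList.length × Fin P.roots.toList.length => p.2 < p.1),
      (P.roots.toList.get p.1 - P.roots.toList.get p.2) ^ 2

lemma reflect_one_X_sub_C (a : ℂ) :
    reflect 1 (X - C a) = 1 + C (-a) * X := by
  have h : (X - C a : Polynomial ℂ) = C 1 * X ^ 1 + C (-a) * X ^ 0 := by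
    simp; ring
  rw [h, reflect_add, reflect_C_mul_X_pow, reflect_C_mul_X_pow]
  simp [revAt_le]

lemma reflect_one_X_sub_C' (a : ℂ) (ha : a ≠ 0) :
    reflect 1 (X - C a) = C (-a) * (X - C a⁻¹) := by
  rw [reflect_one_X_sub_C]
  rw [mul_sub, ← C_mul]
  field_simp
  simp only [C_neg, C_1]; ring

lemma reflect_prod (s : Multiset ℂ) (hs : ∀ a ∈ s, a ≠ 0) :
    reflect (Multiset.card s) (s.map fun a => X - C a).prod
      = C (s.map fun a => -a).prod * (s.map fun a => X - C a⁻¹).prod := by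
  induction s using Multiset.induction with
  | empty => simp only [Multiset.card_zero, Multiset.map_zero, Multiset.prod_zero]; rw [← C_1, reflect_C]; simp
  | cons a s ih =>
    have ha : a ≠ 0 := hs a (Multiset.mem_cons_self a s)
    have hs' : ∀ b ∈ s, b ≠ 0 := fun b hb => hs b (Multiset.mem_cons_of_mem hb)
    rw [Multiset.card_cons, Multiset.map_cons, Multiset.prod_cons]
    have hmul : reflect (1 + Multiset.card s) ((X - C a) * (s.map fun b => X - C b).prod)
        = reflect 1 (X - C a) * reflect (Multiset.card s) (s.map fun b => X - C b).prod := by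
      apply reflect_mul
      · rw [natDegree_X_sub_C]
      · rw [natDegree_multiset_prod_X_sub_C_eq_card]
    rw [add_comm (Multiset.card s) 1, hmul, reflect_one_X_sub_C' a ha, ih hs']
    simp only [Multiset.map_cons, Multiset.prod_cons, C_mul]
    ring


lemma recip_factored (c : ℂ) (s : Multiset ℂ) (hs : ∀ a ∈ s, a ≠ 0) :
    recip (Multiset.card s) (C c * (s.map fun a => X - C a).prod)
      = C ((starRingEnd ℂ) c * (s.map fun a => -((starRingEnd ℂ) a)).prod) *
        (s.map fun a => X - C ((starRingEnd ℂ) a)⁻¹).prod := by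
  unfold recip
  rw [Polynomial.map_mul, map_C, Polynomial.map_multiset_prod, reflect_C_mul]
  have hmm : ((s.map fun a => X - C a).map (Polynomial.map (starRingEnd ℂ)))
      = (s.map (starRingEnd ℂ)).map fun b => X - C b := by
    rw [Multiset.map_map, Multiset.map_map]
    apply Multiset.map_congr rfl
    intro a _
    simp [Polynomial.map_sub]
  rw [hmm]
  have hcard : Multiset.card s = Multiset.card (s.map (starRingEnd ℂ)) := by simp
  rw [hcard, reflect_prod _ (by
    intro b hb
    obtain ⟨a, ha, rfl⟩ := Multiset.mem_map.mp hb
    simpa using hs a ha)]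
  rw [Multiset.map_map, Multiset.map_map, C_mul]
  simp only [Function.comp]
  ring



/-- If `X` has degree `n`, `Dis(X) = 0`, `X(0)` is a positive real, and all roots of
`X` are nonzero, then there is a degree-`n` polynomial `Q` with `Q(0)` a positive real,
`V(Q) = Res(Q, Q*) = 0`, and `Q·Q* = X·X*`. -/
theorem discriminant_zero_shadow (n : ℕ) (P : Polynomial ℂ)
    (hdeg : P.natDegree = n) (hdisc : disc P = 0)
    (h0im : (P.coeff 0).im = 0) (h0pos : 0 < (P.coeff 0).re)
    (hroots : ∀ z ∈ P.roots, z ≠ 0) :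
    ∃ Q : Polynomial ℂ, Q.natDegree = n ∧ (Q.coeff 0).im = 0 ∧ 0 < (Q.coeff 0).re ∧
      res Q (recip n Q) = 0 ∧ Q * recip n Q = P * recip n P := by
  classical
  have hP0 : P.coeff 0 ≠ 0 := fun h => by simp [h] at h0pos
  have hPne : P ≠ 0 := fun h => hP0 (by simp [h])
  have hlc : P.leadingCoeff ≠ 0 := leadingCoeff_ne_zero.mpr hPne
  set lc := P.leadingCoeff with hlcdef
  set T := P.roots with hTdef
  have hsplit : P.Splits := IsAlgClosed.splits P
  have hcard : Multiset.card T = n := by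
    rw [← hdeg]; exact splits_iff_card_roots.mp hsplit
  have hfact : P = C lc * (T.map fun a => X - C a).prod := hsplit.eq_prod_roots
  -- find a repeated root
  have hprod : ∏ p ∈ Finset.univ.filter
      (fun p : Fin P.roots.toList.length × Fin P.roots.toList.length => p.2 < p.1),
      (P.roots.toList.get p.1 - P.roots.toList.get p.2) ^ 2 = 0 := by
    by_contra h
    exact (mul_ne_zero (pow_ne_zero _ hlc) h) hdisc
  obtain ⟨p, hpmem, hpz⟩ := Finset.prod_eq_zero_iff.mp hprod
  have hlt : p.2 < p.1 := (Finset.mem_filter.mp hpmem).2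
  have heq : P.roots.toList.get p.1 = P.roots.toList.get p.2 := by
    have h2 := pow_eq_zero_iff (two_ne_zero) |>.mp hpz
    exact sub_eq_zero.mp h2
  have hnd : ¬ P.roots.toList.Nodup :=
    List.not_nodup_of_get_eq_of_ne _ p.1 p.2 heq (fun h => absurd h (by
      intro hh; exact absurd (congrArg Fin.val hh) (by omega)))
  obtain ⟨z, hzdup⟩ := List.exists_duplicate_iff_not_nodup.mpr hnd
  have hz2 : 2 ≤ Multiset.count z T := by
    have h2 := List.duplicate_iff_two_le_count.mp hzdup
    rwa [← Multiset.coe_count, Multiset.coe_toList] at h2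
  have hzmem : z ∈ T := Multiset.count_pos.mp (by omega)
  have hz0 : z ≠ 0 := hroots z hzmem
  set E := T.erase z with hE
  have hTE : T = z ::ₘ E := (Multiset.cons_erase hzmem).symm
  have hzE : z ∈ E := by
    rw [← Multiset.count_pos, hE, Multiset.count_erase_self]; omega
  set w := ((starRingEnd ℂ) z)⁻¹ with hw
  have hcz : (starRingEnd ℂ) z ≠ 0 := by simpa using hz0
  have hw0 : w ≠ 0 := inv_ne_zero hcz
  set r : ℝ := ‖z‖ with hr
  have hrpos : 0 < r := by
    rw [hr]; exact (norm_pos_iff.mpr hz0)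
  have hrne : (r : ℂ) ≠ 0 := by exact_mod_cast hrpos.ne'
  have hzzr : z * (starRingEnd ℂ) z = (r : ℂ) ^ 2 := by
    rw [Complex.mul_conj, hr, Complex.normSq_eq_norm_sq]; push_cast; ring
  set M := w ::ₘ E with hM
  have h2n : 2 ≤ n := by
    have hcnt : Multiset.count z T ≤ Multiset.card T := Multiset.count_le_card z T
    omega
  have hMcard : Multiset.card M = n := by
    have hEcard : Multiset.card E = n - 1 := by
      rw [hE, Multiset.card_erase_of_mem hzmem, hcard]
      rfl
    rw [hM, Multiset.card_cons, hEcard]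
    omega
  have hEne : ∀ a ∈ E, a ≠ 0 := fun a ha => hroots a (Multiset.mem_of_mem_erase ha)
  have hMne : ∀ a ∈ M, a ≠ 0 := by
    intro a ha
    rcases Multiset.mem_cons.mp ha with h | h
    · rw [h]; exact hw0
    · exact hEne a h
  set cQ := lc * (r : ℂ) with hcQdef
  have hcQ : cQ ≠ 0 := mul_ne_zero hlc hrne
  set Q := C cQ * (M.map fun a => X - C a).prod with hQ
  -- recip computations
  have hrecipQ : recip n Q
      = C ((starRingEnd ℂ) cQ * (M.map fun a => -((starRingEnd ℂ) a)).prod) *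
        (M.map fun a => X - C ((starRingEnd ℂ) a)⁻¹).prod := by
    have h := recip_factored cQ M hMne
    rwa [← hQ, hMcard] at h
  have hrecipP : recip n P
      = C ((starRingEnd ℂ) lc * (T.map fun a => -((starRingEnd ℂ) a)).prod) *
        (T.map fun a => X - C ((starRingEnd ℂ) a)⁻¹).prod := by
    have h := recip_factored lc T hroots
    rwa [← hfact, hcard] at h
  -- constant coefficient
  have key : ∀ (c : ℂ) (s : Multiset ℂ),
      (C c * (s.map fun a => X - C a).prod).coeff 0 = c * (s.map fun a => -a).prod := by
    intro c s
    rw [coeff_zero_eq_eval_zero, eval_mul, eval_C, eval_multiset_prod, Multiset.map_map]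
    congr 1
    exact congrArg Multiset.prod (Multiset.map_congr rfl (fun a _ => by simp))
  have hQ0 : Q.coeff 0 = P.coeff 0 * ((r⁻¹ : ℝ) : ℂ) := by
    rw [hQ, key]
    conv_rhs => rw [hfact, key]
    rw [hM, hTE, Multiset.map_cons, Multiset.map_cons, Multiset.prod_cons, Multiset.prod_cons]
    rw [hw, hcQdef]
    push_cast
    set e := (Multiset.map (fun a => -a) E).prod with he
    field_simp
    linear_combination e * hzzr
  refine ⟨Q, ?_, ?_, ?_, ?_, ?_⟩
  · rw [hQ, natDegree_C_mul hcQ, natDegree_multiset_prod_X_sub_C_eq_card, hMcard]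
  · rw [hQ0, Complex.mul_im]
    simp [h0im]
  · rw [hQ0, Complex.mul_re]
    simp only [Complex.ofReal_re, Complex.ofReal_im, h0im, mul_zero, sub_zero, zero_mul]
    positivity
  · -- res = 0
    have hQroots : Q.roots = M := by
      rw [hQ, roots_C_mul _ hcQ, roots_multiset_prod_X_sub_C]
    have hcQ' : (starRingEnd ℂ) cQ * (M.map fun a => -((starRingEnd ℂ) a)).prod ≠ 0 := by
      apply mul_ne_zero (by simpa using hcQ)
      apply Multiset.prod_ne_zero
      intro h0
      obtain ⟨a, ha, ha0⟩ := Multiset.mem_map.mp h0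
      exact hMne a ha (by simpa using ha0.symm)
    have hRroots : (recip n Q).roots = M.map (fun a => ((starRingEnd ℂ) a)⁻¹) := by
      rw [hrecipQ, roots_C_mul _ hcQ']
      rw [show (M.map fun a => X - C ((starRingEnd ℂ) a)⁻¹)
          = (M.map fun a => ((starRingEnd ℂ) a)⁻¹).map (fun b => X - C b) by
        rw [Multiset.map_map]; rfl]
      rw [roots_multiset_prod_X_sub_C]
    unfold res
    apply mul_eq_zero_of_right
    apply Multiset.prod_eq_zero
    rw [Multiset.mem_bind]
    refine ⟨w, by rw [hQroots, hM]; exact Multiset.mem_cons_self _ _, ?_⟩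
    apply Multiset.mem_map.mpr
    refine ⟨w, ?_, sub_self w⟩
    rw [hRroots]
    exact Multiset.mem_map.mpr ⟨z, by rw [hM]; exact Multiset.mem_cons_of_mem hzE, rfl⟩
  · -- product equality
    have hfw : ((starRingEnd ℂ) w)⁻¹ = z := by
      rw [hw, map_inv₀]
      simp
    have hms : M + M.map (fun a => ((starRingEnd ℂ) a)⁻¹)
        = T + T.map (fun a => ((starRingEnd ℂ) a)⁻¹) := by
      rw [hTE, hM, Multiset.map_cons, Multiset.map_cons, hfw]
      ext x
      simp only [Multiset.count_add, Multiset.count_cons]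
      split_ifs <;> omega
    have hsplitprod : ∀ s : Multiset ℂ,
        (s.map fun a => X - C a).prod * (s.map fun a => X - C ((starRingEnd ℂ) a)⁻¹).prod
          = (((s + s.map fun a => ((starRingEnd ℂ) a)⁻¹)).map fun a => X - C a).prod := by
      intro s
      rw [Multiset.map_add, Multiset.prod_add, Multiset.map_map]
      rfl
    have hscal : cQ * ((starRingEnd ℂ) cQ * (M.map fun a => -((starRingEnd ℂ) a)).prod)
        = lc * ((starRingEnd ℂ) lc * (T.map fun a => -((starRingEnd ℂ) a)).prod) := by
      rw [hM, hTE, Multiset.map_cons, Multiset.map_cons, Multiset.prod_cons, Multiset.prod_cons]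
      rw [hcQdef, hw, map_mul, map_inv₀, Complex.conj_conj, Complex.conj_ofReal]
      set e := (Multiset.map (fun a => -(starRingEnd ℂ) a) E).prod with he
      field_simp
      linear_combination ((starRingEnd ℂ) lc * e) * hzzr
    calc Q * recip n Q
        = C (cQ * ((starRingEnd ℂ) cQ * (M.map fun a => -((starRingEnd ℂ) a)).prod)) *
          (((M + M.map fun a => ((starRingEnd ℂ) a)⁻¹)).map fun a => X - C a).prod := by
          rw [hQ, hrecipQ, ← hsplitprod]; simp only [C_mul]; ring
      _ = C (lc * ((starRingEnd ℂ) lc * (T.map fun a => -((starRingEnd ℂ) a)).prod)) *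
          (((T + T.map fun a => ((starRingEnd ℂ) a)⁻¹)).map fun a => X - C a).prod := by
          rw [hms, hscal]
      _ = P * recip n P := by
          rw [hrecipP, ← hsplitprod]
          conv_rhs => rw [hfact]
          simp only [C_mul]
          ring
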